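/- Let L be a finite lattice and A a lattice-antichain for L. To verify the lattice-antichain condition, it suffices to check a ⊓ b ∈ ↑A for those pairs (a,b) that are minimal, with respect to the product order on L × L, in the set {(a,b) ∈ ↑A × ↑A : a ⊓ b ≠ 0}. -/
import Mathlib


namespace PaperLattice

variable {N : ℕ}

/-- Depth: one less than the maximum length of a chain from `t` down to `a` w.r.t. `le`. -/
noncomputable def dep (le : Fin N → Fin N → Prop) (t a : Fin N) : ℕ :=
  sSup {k | ∃ l : List (Fin N), List.Chain' (fun x y => le y x ∧ y ≠ x) l ∧
    l.head? = some t ∧ l.getLast? = some a ∧ l.length = k + 1}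

/-- The `d`-th level: elements of depth `d`. -/
noncomputable def lev (le : Fin N → Fin N → Prop) (t : Fin N) (d : ℕ) : Set (Fin N) :=
  {a | dep le t a = d}

/-- A labelled poset is levellised if depth is monotone in the nonzero labels. -/
def Levellised (le : Fin N → Fin N → Prop) (t : Fin N) : Prop :=
  ∀ i j : Fin N, 0 < (i : ℕ) → (i : ℕ) ≤ (j : ℕ) → dep le t i ≤ dep le t j

def lt' (le : Fin N → Fin N → Prop) (a b : Fin N) : Prop := le a b ∧ a ≠ b

/-- `b` covers `a`. -/
def CovByRel (le : Fin N → Fin N → Prop) (a b : Fin N) : Prop :=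
  lt' le a b ∧ ∀ x, lt' le a x → lt' le x b → False

/-- The covering set of `a`. -/
def cov (le : Fin N → Fin N → Prop) (a : Fin N) : Set (Fin N) := {b | CovByRel le a b}

/-- The up-set of `A`. -/
def upset (le : Fin N → Fin N → Prop) (A : Set (Fin N)) : Set (Fin N) :=
  {x | ∃ a ∈ A, le a x}

def AntichainRel (le : Fin N → Fin N → Prop) (A : Set (Fin N)) : Prop :=
  ∀ a ∈ A, ∀ b ∈ A, a ≠ b → ¬ le a b

/-- Binary weight of a set of labels. -/
noncomputable def wt (A : Set (Fin N)) : ℕ :=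
  ∑ j : Fin N, A.indicator (fun j => 2 ^ (j : ℕ)) j

/-- `z` is a bottom and `o` a top for `le`. -/
def Bounds (le : Fin N → Fin N → Prop) (z o : Fin N) : Prop :=
  (∀ a, le z a) ∧ (∀ a, le a o)

/-- The order obtained from `le` by adding `m` new atoms, the `i`-th having covering set `A i`. -/
def extLe {n m : ℕ} (le : Fin n → Fin n → Prop) (A : Fin m → Set (Fin n)) :
    Fin (n + m) → Fin (n + m) → Prop := fun x y =>
  if hx : (x : ℕ) < n then
    if hy : (y : ℕ) < n then le ⟨x, hx⟩ ⟨y, hy⟩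
    else (x : ℕ) = 0
  else
    if hy : (y : ℕ) < n then
      (⟨y, hy⟩ : Fin n) ∈ upset le (A ⟨(x : ℕ) - n, by have := x.isLt; omega⟩)
    else x = y

/-- The relabelled order `π(L)`. -/
def permLe {n : ℕ} (π : Equiv.Perm (Fin n)) (le : Fin n → Fin n → Prop) :
    Fin n → Fin n → Prop := fun a b => le (π.symm a) (π.symm b)


/-- the lattice-antichain condition need only be checked on pairs that are
minimal (for the product order) in `{(a,b) ∈ ↑A × ↑A : a ⊓ b ≠ 0}`. -/
theorem statement1 {n : ℕ} (hn : 2 ≤ n) (L : Lattice (Fin n))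
    (hb : Bounds L.le ⟨0, by omega⟩ ⟨1, by omega⟩)
    (A : Set (Fin n)) (hne : A.Nonempty)
    (h0 : ∀ a ∈ A, a ≠ ⟨0, by omega⟩)
    (hanti : AntichainRel L.le A) :
    (∀ a ∈ upset L.le A, ∀ b ∈ upset L.le A,
        L.inf a b = ⟨0, by omega⟩ ∨ L.inf a b ∈ upset L.le A) ↔
      ∀ p : Fin n × Fin n,
        p ∈ {q : Fin n × Fin n | q.1 ∈ upset L.le A ∧ q.2 ∈ upset L.le A ∧
              L.inf q.1 q.2 ≠ ⟨0, by omega⟩} →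
        (∀ q ∈ {q : Fin n × Fin n | q.1 ∈ upset L.le A ∧ q.2 ∈ upset L.le A ∧
              L.inf q.1 q.2 ≠ ⟨0, by omega⟩}, L.le q.1 p.1 → L.le q.2 p.2 → q = p) →
        L.inf p.1 p.2 ∈ upset L.le A := by
  constructor
  · intro h p hp hmin
    rcases h p.1 hp.1 p.2 hp.2.1 with h0' | h1'
    · exact absurd h0' hp.2.2
    · exact h1'
  · intro h a ha b hb
    by_cases hz : L.inf a b = ⟨0, by omega⟩
    · exact Or.inl hz
    right
    -- the set of "bad" pairs below (a,b)
    set S : Set (Fin n × Fin n) := {q : Fin n × Fin n | q.1 ∈ upset L.le A ∧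
      q.2 ∈ upset L.le A ∧ L.inf q.1 q.2 ≠ ⟨0, by omega⟩} with hS
    set S' : Set (Fin n × Fin n) := {q ∈ S | L.le q.1 a ∧ L.le q.2 b} with hS'
    have habS' : (a, b) ∈ S' := ⟨⟨ha, hb, hz⟩, L.le_refl a, L.le_refl b⟩
    -- the strict product order
    set r : Fin n × Fin n → Fin n × Fin n → Prop :=
      fun q p => (L.le q.1 p.1 ∧ L.le q.2 p.2) ∧ q ≠ p with hr
    have htrans : Transitive r := by
      intro x y z hxy hyz
      refine ⟨⟨L.le_trans _ _ _ hxy.1.1 hyz.1.1, L.le_trans _ _ _ hxy.1.2 hyz.1.2⟩, ?_⟩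
      rintro rfl
      exact hxy.2 (Prod.ext (L.le_antisymm _ _ hxy.1.1 hyz.1.1)
        (L.le_antisymm _ _ hxy.1.2 hyz.1.2))
    have hirrefl : ∀ x, ¬ r x x := fun x hx => hx.2 rfl
    have hwf : WellFounded r := by
      have : IsTrans (Fin n × Fin n) r := ⟨htrans⟩
      have : IsIrrefl (Fin n × Fin n) r := ⟨hirrefl⟩
      exact Finite.wellFounded_of_trans_of_irrefl r
    obtain ⟨m, hmS', hmmin⟩ := hwf.has_min S' ⟨(a, b), habS'⟩
    have hmem : L.inf m.1 m.2 ∈ upset L.le A := by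
      apply h m hmS'.1
      intro q hq hq1 hq2
      by_contra hne'
      exact hmmin q ⟨hq, L.le_trans _ _ _ hq1 hmS'.2.1, L.le_trans _ _ _ hq2 hmS'.2.2⟩
        ⟨⟨hq1, hq2⟩, hne'⟩
    obtain ⟨c, hcA, hc⟩ := hmem
    refine ⟨c, hcA, L.le_trans _ _ _ hc ?_⟩
    exact L.le_inf _ _ _ (L.le_trans _ _ _ (L.inf_le_left _ _) hmS'.2.1)
      (L.le_trans _ _ _ (L.inf_le_right _ _) hmS'.2.2)

end PaperLattice
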